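/- arXiv:2004.07411 — 3 statements merged into one kernel-verified Lean document; each statement's English description precedes it below -/
import Mathlib

section
/- For T, λ > 0, if T < π/(2λ), then every complex root s of the transcendental equation s·e^{Ts} + λ = 0 satisfies Re(s) < 0. -/
theorem delay_small_roots_stable (T lam : ℝ) (hT : 0 < T) (hlam : 0 < lam)
    (h : T < Real.pi / (2 * lam)) :
    ∀ s : ℂ, s * Complex.exp (T * s) + lam = 0 → s.re < 0 := by
  intro s hs
  by_contra hσ
  push_neg at hσ
  have hTlam : T * lam < Real.pi / 2 := by
    rw [lt_div_iff₀ (by positivity)] at h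
    nlinarith
  have hs' : s * Complex.exp (T * s) = -(lam : ℂ) := by
    linear_combination hs
  have habs : ‖s‖ * Real.exp (T * s.re) = lam := by
    have := congrArg (‖·‖) hs'
    simpa [norm_mul, Complex.norm_exp, abs_of_pos hlam] using this
  have hexp1 : (1:ℝ) ≤ Real.exp (T * s.re) := Real.one_le_exp (by positivity)
  have hsle : ‖s‖ ≤ lam := by
    nlinarith [norm_nonneg s]
  have himle : |s.im| ≤ lam := le_trans (Complex.abs_im_le_norm s) hsle
  have hTω : |T * s.im| < Real.pi / 2 := by
    rw [abs_mul, abs_of_pos hT]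
    nlinarith [abs_nonneg s.im]
  have hcos : 0 < Real.cos (T * s.im) := by
    apply Real.cos_pos_of_mem_Ioo
    constructor <;> [linarith [abs_lt.mp hTω |>.1]; exact (abs_lt.mp hTω).2]
  have him : s.re * (Real.exp (T * s.re) * Real.sin (T * s.im))
      + s.im * (Real.exp (T * s.re) * Real.cos (T * s.im)) = 0 := by
    have := congrArg Complex.im hs'
    simpa [Complex.mul_im, Complex.exp_im, Complex.exp_re] using this
  have hreeq : s.re * (Real.exp (T * s.re) * Real.cos (T * s.im))
      - s.im * (Real.exp (T * s.re) * Real.sin (T * s.im)) = -lam := by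
    have := congrArg Complex.re hs'
    simpa [Complex.mul_re, Complex.exp_im, Complex.exp_re] using this
  rcases eq_or_ne s.im 0 with hω | hω
  · rw [hω] at hreeq
    simp at hreeq
    nlinarith [Real.exp_pos (T * s.re)]
  · have hsin : 0 < s.im * Real.sin (T * s.im) := by
      rcases lt_or_gt_of_ne hω with hneg | hpos
      · have : Real.sin (T * s.im) < 0 := by
          apply Real.sin_neg_of_neg_of_neg_pi_lt
          · nlinarith
          · have := (abs_lt.mp hTω).1
            have : -(Real.pi/2) < T * s.im := this
            linarith [Real.pi_pos]
        nlinarith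
      · have : 0 < Real.sin (T * s.im) := by
          apply Real.sin_pos_of_pos_of_lt_pi
          · nlinarith
          · have := (abs_lt.mp hTω).2
            linarith [Real.pi_pos]
        nlinarith
    have him2 : s.re * (s.im * Real.sin (T * s.im)) * Real.exp (T * s.re)
        + s.im ^ 2 * (Real.exp (T * s.re) * Real.cos (T * s.im)) = 0 := by
      linear_combination s.im * him
    have t1 : 0 < s.im ^ 2 * (Real.exp (T * s.re) * Real.cos (T * s.im)) :=
      mul_pos (pow_two_pos_of_ne_zero hω) (mul_pos (Real.exp_pos _) hcos)
    have t2 : 0 ≤ s.re * (s.im * Real.sin (T * s.im)) * Real.exp (T * s.re) :=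
      mul_nonneg (mul_nonneg hσ hsin.le) (Real.exp_pos _).le
    linarith
end

section
/- For T, λ > 0, if T > π/(2λ), then the transcendental equation s·e^{Ts} + λ = 0 has at least one complex root s with Re(s) > 0. -/
open Real Set

theorem delay_large_unstable_root (T lam : ℝ) (hT : 0 < T) (hlam : 0 < lam)
    (h : Real.pi / (2 * lam) < T) :
    ∃ s : ℂ, s * Complex.exp (T * s) + lam = 0 ∧ 0 < s.re := by
  have hπ := Real.pi_pos
  set a : ℝ := Real.pi / (2 * T) with ha_def
  have halam : a < lam := by
    rw [ha_def, div_lt_iff₀ (by positivity)]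
    rw [div_lt_iff₀ (by positivity)] at h
    nlinarith
  set ε : ℝ := min (Real.pi/4) (Real.pi/(2*T*lam)) with hε_def
  have hε0 : 0 < ε := lt_min (by positivity) (by positivity)
  have hε1 : ε ≤ Real.pi/4 := min_le_left _ _
  have hε2 : ε ≤ Real.pi/(2*T*lam) := min_le_right _ _
  set b : ℝ := (Real.pi - ε)/T with hb_def
  have hab : a < b := by
    rw [ha_def, hb_def, div_lt_div_iff₀ (by positivity) hT]
    nlinarith
  -- bounds on ω*T for ω ∈ [a,b]
  have haT : a * T = Real.pi / 2 := by rw [ha_def, div_mul_eq_mul_div, div_eq_div_iff (by positivity) (by positivity)]; ring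
  have hbT : b * T = Real.pi - ε := by rw [hb_def, div_mul_cancel₀ _ hT.ne']
  have hsin_pos : ∀ ω ∈ Icc a b, 0 < Real.sin (ω * T) := by
    intro ω hω
    apply Real.sin_pos_of_pos_of_lt_pi
    · nlinarith [hω.1]
    · nlinarith [hω.2]
  have hcos_nonpos : ∀ ω ∈ Icc a b, Real.cos (ω * T) ≤ 0 := by
    intro ω hω
    apply Real.cos_nonpos_of_pi_div_two_le_of_le
    · nlinarith [hω.1]
    · nlinarith [hω.2, hε0]
  set g : ℝ → ℝ := fun ω => Real.exp (-(T * ω * Real.cos (ω * T)) / Real.sin (ω * T)) * ω / Real.sin (ω * T) with hg_def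
  have hcont : ContinuousOn g (Icc a b) := by
    apply ContinuousOn.div
    · apply ContinuousOn.mul
      · apply ContinuousOn.rexp
        apply ContinuousOn.div
        · fun_prop
        · fun_prop
        · intro ω hω; exact (hsin_pos ω hω).ne'
      · fun_prop
    · fun_prop
    · intro ω hω; exact (hsin_pos ω hω).ne'
  have hga : g a = a := by
    have : a * T = Real.pi / 2 := haT
    simp [hg_def, this, Real.sin_pi_div_two, Real.cos_pi_div_two]
  have hgb : lam ≤ g b := by
    have hsb : Real.sin (b * T) = Real.sin ε := by
      rw [hbT, Real.sin_pi_sub]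
    have hsb_pos : 0 < Real.sin ε := by
      apply Real.sin_pos_of_pos_of_lt_pi hε0; nlinarith
    have hsb_le : Real.sin ε ≤ Real.pi/(2*T*lam) := le_trans (Real.sin_le hε0.le) hε2
    have hb_pos : 0 < b := by nlinarith
    have hexp : 1 ≤ Real.exp (-(T * b * Real.cos (b * T)) / Real.sin (b * T)) := by
      rw [Real.one_le_exp_iff]
      apply div_nonneg _ (hsin_pos b (right_mem_Icc.2 hab.le)).le
      have := hcos_nonpos b (right_mem_Icc.2 hab.le)
      nlinarith
    have hratio : lam ≤ b / Real.sin (b * T) := by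
      rw [hsb, le_div_iff₀ hsb_pos]
      have hb_lb : Real.pi/(2*T) ≤ b := by nlinarith
      calc lam * Real.sin ε ≤ lam * (Real.pi/(2*T*lam)) := by nlinarith
        _ = Real.pi/(2*T) := by field_simp
        _ ≤ b := hb_lb
    calc lam ≤ b / Real.sin (b * T) := hratio
      _ = 1 * b / Real.sin (b * T) := by ring
      _ ≤ g b := by
          rw [hg_def]
          apply div_le_div_of_nonneg_right ?_ (hsin_pos b (right_mem_Icc.2 hab.le)).le
          nlinarith
  -- IVT
  obtain ⟨ω, hωmem, hgω⟩ := intermediate_value_Icc hab.le hcont (by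
    rw [hga]; exact ⟨halam.le, hgb⟩ : lam ∈ Icc (g a) (g b))
  have hωa : a < ω := by
    rcases eq_or_lt_of_le hωmem.1 with he | h'
    · exfalso; rw [← he, hga] at hgω; exact absurd hgω halam.ne
    · exact h'
  have hωb : ω ≤ b := hωmem.2
  have hgω' : Real.exp (-(T * ω * Real.cos (ω * T)) / Real.sin (ω * T)) * ω / Real.sin (ω * T) = lam := hgω
  clear hgω hga hgb hcont hsin_pos hcos_nonpos hg_def
  clear_value g
  clear g
  have hω_pos : 0 < ω := lt_trans (by positivity) hωa
  have hsn : 0 < Real.sin (ω * T) := by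
    apply Real.sin_pos_of_pos_of_lt_pi
    · nlinarith [mul_lt_mul_of_pos_right hωa hT, hπ]
    · have h2 := mul_le_mul_of_nonneg_right hωb hT.le
      rw [hbT] at h2
      linarith
  have hcs : Real.cos (ω * T) < 0 := by
    apply Real.cos_neg_of_pi_div_two_lt_of_lt
    · have h1 := mul_lt_mul_of_pos_right hωa hT
      linarith [haT ▸ h1]
    · have h2 := mul_le_mul_of_nonneg_right hωb hT.le
      rw [hbT] at h2
      linarith
  obtain ⟨σ, hσ_def⟩ : ∃ σ : ℝ, σ = -(ω * Real.cos (ω * T)) / Real.sin (ω * T) := ⟨_, rfl⟩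
  have hσ_pos : 0 < σ := by
    rw [hσ_def]
    exact div_pos (neg_pos.mpr (mul_neg_of_pos_of_neg hω_pos hcs)) hsn
  refine ⟨⟨σ, ω⟩, ?_, hσ_pos⟩
  have hTσ : T * σ = -(T * ω * Real.cos (ω * T)) / Real.sin (ω * T) := by
    rw [hσ_def]; ring
  have hE : Real.exp (T * σ) * ω / Real.sin (ω * T) = lam := by
    rw [hTσ]; exact hgω'
  have key : σ * Real.cos (ω * T) - ω * Real.sin (ω * T) = -ω / Real.sin (ω * T) := by
    rw [hσ_def]
    field_simp
    linear_combination (-1) * Real.sin_sq_add_cos_sq (ω * T)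
  have him : σ * Real.sin (ω * T) = -(ω * Real.cos (ω * T)) := by
    rw [hσ_def]; exact div_mul_cancel₀ _ hsn.ne' 
  have hE' : Real.exp (σ * T) * ω / Real.sin (T * ω) = lam := by
    rw [mul_comm σ T, mul_comm T ω]; exact hE
  have key' : σ * Real.cos (T * ω) - ω * Real.sin (T * ω) = -ω / Real.sin (T * ω) := by
    rw [mul_comm T ω]; exact key
  have him' : σ * Real.sin (T * ω) = -(ω * Real.cos (T * ω)) := by
    rw [mul_comm T ω]; exact him
  rw [Complex.ext_iff]
  constructor
  · simp only [Complex.add_re, Complex.mul_re, Complex.exp_re, Complex.exp_im,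
      Complex.ofReal_re, Complex.zero_re, Complex.mul_im, Complex.ofReal_im]
    ring_nf
    linear_combination Real.exp (σ * T) * key' - hE'
  · simp only [Complex.add_im, Complex.mul_im, Complex.mul_re, Complex.exp_re, Complex.exp_im,
      Complex.ofReal_im, Complex.zero_im, Complex.ofReal_re]
    ring_nf
    linear_combination Real.exp (σ * T) * him'
end

section
/- Let L be an n×n real matrix with L·𝟏 = 0 and kᵀL = 0 for some vector k with all entries positive and kᵀ𝟏 ≠ 0. Then the nonzero spectrum of L + 𝟏kᵀ equals the nonzero spectrum of L together with the additional eigenvalue kᵀ𝟏, i.e. λ(L + 𝟏kᵀ) = {kᵀ𝟏} ∪ (λ(L) \ {0}), assuming 0 is a simple eigenvalue of L. -/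
open Matrix

lemma matrix_mem_spectrum_iff' {n : ℕ} (A : Matrix (Fin n) (Fin n) ℂ) (μ : ℂ) :
    μ ∈ spectrum ℂ A ↔ ∃ v ≠ 0, A.mulVec v = μ • v := by
  rw [spectrum.mem_iff]
  have h1 : ¬ IsUnit (algebraMap ℂ (Matrix (Fin n) (Fin n) ℂ) μ - A) ↔
      (algebraMap ℂ (Matrix (Fin n) (Fin n) ℂ) μ - A).det = 0 := by
    rw [Matrix.isUnit_iff_isUnit_det, isUnit_iff_ne_zero, not_not]
  have key : ∀ v, (algebraMap ℂ (Matrix (Fin n) (Fin n) ℂ) μ - A).mulVec v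
      = μ • v - A.mulVec v := by
    intro v
    rw [Matrix.sub_mulVec, Algebra.algebraMap_eq_smul_one, Matrix.smul_mulVec,
      Matrix.one_mulVec]
  rw [h1, ← Matrix.exists_mulVec_eq_zero_iff]
  constructor
  · rintro ⟨v, hv, h⟩
    rw [key, sub_eq_zero] at h
    exact ⟨v, hv, h.symm⟩
  · rintro ⟨v, hv, h⟩
    exact ⟨v, hv, by rw [key, h, sub_self]⟩

lemma ker_le_span_of_simple {n : ℕ} (A : Matrix (Fin n) (Fin n) ℂ)
    (hroot : A.charpoly.rootMultiplicity 0 = 1)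
    (u : Fin n → ℂ) (hu : u ≠ 0) (hAu : A.mulVec u = 0) :
    ∀ v, A.mulVec v = 0 → ∃ c : ℂ, v = c • u := by
  set φ : Module.End ℂ (Fin n → ℂ) := Matrix.toLin' A with hφ
  have hchar : φ.charpoly = A.charpoly := by
    rw [hφ, ← LinearMap.charpoly_toMatrix (Matrix.toLin' A) (Pi.basisFun ℂ (Fin n)),
      LinearMap.toMatrix_eq_toMatrix', LinearMap.toMatrix'_toLin']
  have h1 : Module.finrank ℂ (φ.maxGenEigenspace 0) = 1 := by
    rw [LinearMap.finrank_maxGenEigenspace_zero_eq, hchar,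
      ← Polynomial.rootMultiplicity_eq_natTrailingDegree', hroot]
  have hker : LinearMap.ker φ ≤ φ.maxGenEigenspace 0 := by
    rw [← Module.End.eigenspace_zero]
    exact (φ.genEigenspace 0).monotone le_top
  have hu' : u ∈ LinearMap.ker φ := by
    simpa [hφ, Matrix.toLin'_apply] using hAu
  have hspan : (Submodule.span ℂ {u} : Submodule ℂ (Fin n → ℂ)) ≤ LinearMap.ker φ := by
    rwa [Submodule.span_singleton_le_iff_mem]
  have hfk : Module.finrank ℂ (LinearMap.ker φ) ≤ 1 := h1 ▸ Submodule.finrank_mono hker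
  have heq : (Submodule.span ℂ {u} : Submodule ℂ (Fin n → ℂ)) = LinearMap.ker φ := by
    apply Submodule.eq_of_le_of_finrank_le hspan
    rwa [finrank_span_singleton hu]
  intro v hv
  have : v ∈ (Submodule.span ℂ {u} : Submodule ℂ (Fin n → ℂ)) := by
    rw [heq]; simpa [hφ, Matrix.toLin'_apply] using hv
  obtain ⟨c, hc⟩ := Submodule.mem_span_singleton.mp this
  exact ⟨c, hc.symm⟩

theorem rank_one_shift_spectrum {n : ℕ} (L : Matrix (Fin n) (Fin n) ℝ)
    (k : Fin n → ℝ) (hk : ∀ i, 0 < k i)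
    (hL1 : L.mulVec (fun _ => 1) = 0)
    (hkL : Matrix.vecMul k L = 0)
    (hk1 : k ⬝ᵥ (fun _ => (1 : ℝ)) ≠ 0)
    (hsimple : ((L.map (Complex.ofReal)).charpoly).rootMultiplicity 0 = 1) :
    spectrum ℂ ((L + Matrix.vecMulVec (fun _ => 1) k).map (Complex.ofReal)) =
      {((k ⬝ᵥ (fun _ => (1 : ℝ)) : ℝ) : ℂ)} ∪
        (spectrum ℂ (L.map (Complex.ofReal)) \ {0}) := by
  have hn : Nonempty (Fin n) := by
    by_contra h
    have hE : IsEmpty (Fin n) := not_nonempty_iff.mp h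
    have : (L.map (Complex.ofReal)).charpoly = 1 := by
      rw [Matrix.charpoly, Matrix.det_isEmpty]
    rw [this, Polynomial.rootMultiplicity_eq_zero (by simp [Polynomial.IsRoot])] at hsimple
    exact one_ne_zero hsimple.symm
  set A := L.map (Complex.ofReal) with hA
  set c : Fin n → ℂ := fun i => ((k i : ℝ) : ℂ) with hc
  set s : ℂ := ((k ⬝ᵥ (fun _ => (1 : ℝ)) : ℝ) : ℂ) with hs
  have hone : (fun _ => (1:ℂ)) ≠ (0 : Fin n → ℂ) := by
    intro h
    obtain ⟨i⟩ := hn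
    have := congrFun h i
    simp at this
  have hA1 : A.mulVec (fun _ => (1:ℂ)) = 0 := by
    funext i
    have h0 := congrFun hL1 i
    simp only [Matrix.mulVec, dotProduct, Pi.zero_apply, mul_one] at h0 ⊢
    simp only [hA, Matrix.map_apply, mul_one]
    exact_mod_cast congrArg (Complex.ofReal) h0
  have hcA : Matrix.vecMul c A = 0 := by
    funext j
    have h0 := congrFun hkL j
    simp only [Matrix.vecMul, dotProduct, Pi.zero_apply] at h0 ⊢
    simp only [hA, hc, Matrix.map_apply]
    exact_mod_cast congrArg (Complex.ofReal) h0
  have hcs : c ⬝ᵥ (fun _ => (1:ℂ)) = s := by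
    simp only [hc, hs, dotProduct, mul_one]
    push_cast
    ring
  have hs0 : s ≠ 0 := by
    rw [hs]
    exact_mod_cast hk1
  have hM : (L + Matrix.vecMulVec (fun _ => 1) k).map Complex.ofReal
      = A + Matrix.vecMulVec (fun _ => (1:ℂ)) c := by
    ext i j
    simp [hA, hc, Matrix.vecMulVec_apply, Matrix.map_apply]
  have hMv : ∀ v : Fin n → ℂ, (A + Matrix.vecMulVec (fun _ => (1:ℂ)) c).mulVec v
      = A.mulVec v + (c ⬝ᵥ v) • (fun _ => (1:ℂ)) := by
    intro v
    funext i
    simp only [Matrix.add_mulVec, Pi.add_apply, Pi.smul_apply, smul_eq_mul, mul_one]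
    congr 1
    simp [Matrix.mulVec, dotProduct, Matrix.vecMulVec_apply]
  ext μ
  simp only [hM, Set.mem_union, Set.mem_singleton_iff, Set.mem_diff]
  rw [matrix_mem_spectrum_iff', matrix_mem_spectrum_iff']
  constructor
  · rintro ⟨v, hv, hveq⟩
    rw [hMv] at hveq
    have hdot : c ⬝ᵥ (A.mulVec v) = 0 := by
      rw [Matrix.dotProduct_mulVec, hcA, zero_dotProduct]
    have key : (c ⬝ᵥ v) * (s - μ) = 0 := by
      have h2 := congrArg (fun w => c ⬝ᵥ w) hveq
      simp only [dotProduct_add, dotProduct_smul, hdot, hcs, smul_eq_mul, zero_add] at h2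
      linear_combination h2
    rcases mul_eq_zero.mp key with h0 | hsm
    · have hAv : A.mulVec v = μ • v := by
        have := hveq
        rw [h0, zero_smul, add_zero] at this
        exact this
      by_cases hμ : μ = 0
      · exfalso
        subst hμ
        obtain ⟨a, ha⟩ := ker_le_span_of_simple A hsimple (fun _ => (1:ℂ)) hone hA1 v
          (by simpa using hAv)
        have hcv : c ⬝ᵥ v = a * s := by
          rw [ha, ← hcs]
          simp [dotProduct_smul]
        have ha0 : a ≠ 0 := by
          intro h
          rw [h, zero_smul] at ha
          exact hv ha
        rw [hcv] at h0
        exact (mul_ne_zero ha0 hs0) h0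
      · exact Or.inr ⟨⟨v, hv, hAv⟩, hμ⟩
    · left
      have := sub_eq_zero.mp hsm
      exact this.symm
  · rintro (rfl | ⟨⟨v, hv, hAv⟩, hμ⟩)
    · refine ⟨fun _ => (1:ℂ), hone, ?_⟩
      rw [hMv, hA1, hcs, zero_add]
    · have hdv : c ⬝ᵥ v = 0 := by
        have h2 : μ * (c ⬝ᵥ v) = 0 := by
          have h4 := congrArg (fun w => c ⬝ᵥ w) hAv
          simp only [Matrix.dotProduct_mulVec, hcA, zero_dotProduct, dotProduct_smul,
            smul_eq_mul] at h4
          exact h4.symm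
        exact (mul_eq_zero.mp h2).resolve_left hμ
      refine ⟨v, hv, ?_⟩
      rw [hMv, hdv, zero_smul, add_zero, hAv]
end
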